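/- Consider the finite-volume Ising model on a finite set Λ ⊂ ℤ^d with inverse temperature β ≥ 0 and ferromagnetic couplings J ≥ 0. Let ℓ > 0, let B_ℓ := {y ∈ ℤ^d : |y| ≤ ℓ}, and assume B_ℓ ⊆ Λ (so in particular o ∈ B_ℓ). Then for every x ∈ Λ with |x| > ℓ: ⟨φ_o φ_x⟩_{β,Λ} ≤ ∑_{u ∈ B_ℓ} ∑_{v ∈ Λ : |v| > ℓ} ⟨φ_o φ_u⟩_{β,B_ℓ} · tanh(β J_{u,v}) · ⟨φ_v φ_x⟩_{β,Λ}. -/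

import Mathlib

open scoped BigOperators ENNReal
open Filter

noncomputable section

namespace LongRange

abbrev V (d : ℕ) : Type := Fin d → ℤ

variable {d : ℕ}

def nrm (x : V d) : ℝ := Real.sqrt (∑ i, ((x i : ℝ)) ^ 2)

/-- The spin value attached to a Boolean. -/
def spin (b : Bool) : ℝ := if b then 1 else -1

/-- The Ising Hamiltonian on the finite volume `Λ` with couplings `J`
(free boundary condition); the sum over unordered pairs of distinct
vertices is written as half the sum over ordered pairs. -/
def isingH (Λ : Finset (V d)) (J : V d → V d → ℝ) (φ : ↥Λ → Bool) : ℝ :=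
  -(1 / 2) * ∑ u : ↥Λ, ∑ v : ↥Λ,
      if u.1 ≠ v.1 then J u.1 v.1 * spin (φ u) * spin (φ v) else 0

/-- The finite-volume Ising two-point function `⟨φ_a φ_b⟩_{β,Λ}`. -/
def corr (Λ : Finset (V d)) (β : ℝ) (J : V d → V d → ℝ) (a b : ↥Λ) : ℝ :=
  (∑ φ : ↥Λ → Bool, spin (φ a) * spin (φ b) * Real.exp (-(β * isingH Λ J φ))) /
    ∑ φ : ↥Λ → Bool, Real.exp (-(β * isingH Λ J φ))


namespace LR

open scoped Classical

variable {α : Type*} [DecidableEq α]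

/-- indicator of a vertex, with values in `ZMod 2`. -/
def x1 (a : α) : α → ZMod 2 := fun v => if v = a then 1 else 0

def x2 (a b : α) : α → ZMod 2 := fun v => x1 a v + x1 b v

def xA (A : Finset α) : α → ZMod 2 := fun v => if v ∈ A then 1 else 0

/-- boundary (odd-degree indicator) of an edge set. -/
def SB (T : Finset (Sym2 α)) : α → ZMod 2 := fun v => ∑ e ∈ T, if v ∈ e then 1 else 0

lemma SB_union_of_disjoint {T T' : Finset (Sym2 α)} (h : Disjoint T T') :
    SB (T ∪ T') = SB T + SB T' := by
  funext v; simp [SB, Finset.sum_union h, Pi.add_apply]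

lemma SB_sdiff_of_subset {T T' : Finset (Sym2 α)} (h : T' ⊆ T) :
    SB (T \ T') = SB T + SB T' := by
  funext v
  have := Finset.sum_sdiff (f := fun e => if v ∈ e then (1 : ZMod 2) else 0) h
  have h2 : SB (T \ T') v + SB T' v = SB T v := this
  have : SB (T \ T') v + (SB T' v + SB T' v) = SB T v + SB T' v := by
    rw [← add_assoc, h2]
  simpa [CharTwo.add_self_eq_zero] using this

lemma SB_symmDiff (T T' : Finset (Sym2 α)) : SB (symmDiff T T') = SB T + SB T' := by
  have h1 : symmDiff T T' = (T ∪ T') \ (T ∩ T') := by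
    ext e; simp [Finset.mem_symmDiff, Finset.mem_union, Finset.mem_sdiff]; tauto
  funext v
  have h2 := congrFun (SB_sdiff_of_subset (T := T ∪ T') (T' := T ∩ T')
    (Finset.inter_subset_union)) v
  have h3 : SB (T ∪ T') v + SB (T ∩ T') v = SB T v + SB T' v := by
    simpa [SB] using Finset.sum_union_inter (s₁ := T) (s₂ := T')
      (f := fun e => if v ∈ e then (1 : ZMod 2) else 0)
  rw [h1]
  calc SB ((T ∪ T') \ (T ∩ T')) v = SB (T ∪ T') v + SB (T ∩ T') v := h2
  _ = SB T v + SB T' v := h3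
  _ = (SB T + SB T') v := rfl

lemma SB_singleton (e : Sym2 α) : SB {e} = fun v => if v ∈ e then 1 else 0 := by
  funext v; simp only [SB, Finset.sum_singleton]

lemma SB_singleton_nondiag {a b : α} (hab : a ≠ b) : SB {s(a,b)} = x2 a b := by
  funext v
  rw [SB_singleton]
  by_cases hva : v = a <;> by_cases hvb : v = b <;>
    simp_all [x2, x1, Sym2.mem_iff]

lemma SB_insert {e : Sym2 α} {T : Finset (Sym2 α)} (he : e ∉ T) :
    SB (insert e T) = SB {e} + SB T := by
  rw [Finset.insert_eq]
  exact SB_union_of_disjoint (by simpa using he)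

lemma SB_eq_zero_of_not_mem {T : Finset (Sym2 α)} {v : α} (h : ∀ e ∈ T, v ∉ e) :
    SB T v = 0 := by
  simp only [SB]
  exact Finset.sum_eq_zero fun e he => by simp [h e he]

lemma exists_edge_of_SB_ne_zero {T : Finset (Sym2 α)} {v : α} (h : SB T v ≠ 0) :
    ∃ e ∈ T, v ∈ e := by
  by_contra hc
  push_neg at hc
  exact h (SB_eq_zero_of_not_mem hc)


lemma x2_comm (a b : α) : x2 a b = x2 b a := by
  funext v; simp [x2, add_comm]

lemma x2_self (a : α) : x2 a a = 0 := by
  funext v; simp [x2, x1, CharTwo.add_self_eq_zero]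

lemma x1_add_x1 (a : α) : x1 a + x1 a = 0 := by
  funext v; simp [x1, CharTwo.add_self_eq_zero]

/-- Path-type lemma: if `v` has odd degree in `M` (no diagonal edges), then there is
another odd-degree vertex `u` and a sub-edge-set `P ⊆ M` whose boundary is `{v,u}`. -/
lemma exists_pathlike : ∀ (M : Finset (Sym2 α)), (∀ e ∈ M, ¬ e.IsDiag) →
    ∀ v : α, SB M v = 1 →
    ∃ u, u ≠ v ∧ SB M u = 1 ∧ ∃ P ⊆ M, SB P = x2 v u := by
  intro M
  induction M using Finset.strongInductionOn with
  | _ M ih =>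
    intro hdiag v hv
    obtain ⟨e, heM, hve⟩ := exists_edge_of_SB_ne_zero (T := M) (v := v) (by rw [hv]; exact one_ne_zero)
    set w := Sym2.Mem.other hve with hw
    have hsoe : s(v, w) = e := Sym2.other_spec hve
    have hvw : v ≠ w := by
      intro h
      apply hdiag e heM
      rw [← hsoe, ← h]
      exact Sym2.mk_isDiag_iff.mpr rfl
    have heM' : SB (M.erase e) = SB M + SB {e} := by
      have : M.erase e = M \ {e} := by
        ext f; simp [Finset.mem_erase, Finset.mem_sdiff, and_comm]
      rw [this]
      exact SB_sdiff_of_subset (by simpa using heM)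
    have hSBe : SB {e} = x2 v w := by rw [← hsoe]; exact SB_singleton_nondiag hvw
    by_cases hwM : SB M w = 1
    · exact ⟨w, fun h => hvw h.symm, hwM, ⟨{e}, by simpa using heM, by rw [hSBe, x2_comm]⟩⟩
    · -- SB M w = 0
      have hz01 : ∀ z : ZMod 2, z ≠ 1 → z = 0 := by decide
      have hw0 : SB M w = 0 := hz01 _ hwM
      have hMe : SB (M.erase e) = SB M + x2 v w := by rw [heM', hSBe]
      have hMew : SB (M.erase e) w = 1 := by
        rw [hMe]; simp [Pi.add_apply, hw0, x2, x1, hvw, Ne.symm hvw]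
      have hss : M.erase e ⊂ M := Finset.erase_ssubset heM
      obtain ⟨u, huw, hu1, P', hP'sub, hP'⟩ :=
        ih (M.erase e) hss (fun f hf => hdiag f (Finset.mem_of_mem_erase hf)) w hMew
      by_cases huv : u = v
      · -- go around: remove the whole cycle insert e P' and recurse
        rw [huv] at hP'
        have heP' : e ∉ P' := fun h => (Finset.notMem_erase e M) (hP'sub h)
        have hsub2 : insert e P' ⊆ M := by
          intro f hf
          rcases Finset.mem_insert.mp hf with rfl | hf
          · exact heM
          · exact Finset.mem_of_mem_erase (hP'sub hf)
        have hSBi : SB (insert e P') = 0 := by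
          rw [SB_insert heP', hSBe, hP']
          funext z
          simp only [Pi.add_apply, x2, Pi.zero_apply]
          generalize x1 v z = a
          generalize x1 w z = b
          revert a b; decide
        have hM'' : SB (M \ insert e P') = SB M := by
          rw [SB_sdiff_of_subset hsub2, hSBi, add_zero]
        have hss2 : M \ insert e P' ⊂ M := by
          apply Finset.ssubset_iff_of_subset (Finset.sdiff_subset) |>.mpr
          exact ⟨e, heM, by simp⟩
        obtain ⟨u2, hu2v, hu2, P, hPsub, hP⟩ :=
          ih _ hss2 (fun f hf => hdiag f (Finset.mem_sdiff.mp hf).1) v (by rw [hM'']; exact hv)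
        refine ⟨u2, hu2v, by rwa [hM''] at hu2, P, fun f hf => (Finset.mem_sdiff.mp (hPsub hf)).1, hP⟩
      · -- u works directly for M
        have huMe : SB M u = 1 := by
          have : SB M u = SB (M.erase e) u + x2 v w u := by
            rw [hMe]
            simp only [Pi.add_apply]
            rw [add_assoc, CharTwo.add_self_eq_zero, add_zero]
          rw [this, hu1]
          have : x2 v w u = 0 := by simp [x2, x1, huv, huw]
          rw [this, add_zero]
        have heP' : e ∉ P' := fun h => (Finset.notMem_erase e M) (hP'sub h)
        refine ⟨u, huv, huMe, insert e P', ?_, ?_⟩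
        · intro f hf
          rcases Finset.mem_insert.mp hf with rfl | hf
          · exact heM
          · exact Finset.mem_of_mem_erase (hP'sub hf)
        · rw [SB_insert heP', hSBe, hP']
          funext z
          simp only [Pi.add_apply, x2]
          generalize x1 v z = a
          generalize x1 w z = b
          generalize x1 u z = c
          revert a b c; decide


variable (w : Sym2 α → ℝ)

def WW (T : Finset (Sym2 α)) : ℝ := ∏ e ∈ T, w e

def Z (E : Finset (Sym2 α)) (χ : α → ZMod 2) : ℝ :=
  ∑ T ∈ E.powerset, if SB T = χ then WW w T else 0

variable {w}

lemma WW_nonneg (hw : ∀ e, 0 ≤ w e) (T : Finset (Sym2 α)) : 0 ≤ WW w T :=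
  Finset.prod_nonneg fun e _ => hw e

lemma Z_nonneg (hw : ∀ e, 0 ≤ w e) (E : Finset (Sym2 α)) (χ : α → ZMod 2) :
    0 ≤ Z w E χ :=
  Finset.sum_nonneg fun T _ => by
    by_cases h : SB T = χ <;> simp [h, WW_nonneg hw]

lemma one_le_Z_zero (hw : ∀ e, 0 ≤ w e) (E : Finset (Sym2 α)) : 1 ≤ Z w E 0 := by
  have hemp : ∅ ∈ E.powerset := Finset.empty_mem_powerset E
  have : (if SB (∅ : Finset (Sym2 α)) = (0 : α → ZMod 2) then WW w ∅ else 0) = 1 := by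
    rw [if_pos (by funext v; simp [SB])]
    simp [WW]
  calc (1:ℝ) = _ := this.symm
  _ ≤ Z w E 0 := Finset.single_le_sum (f := fun T => if SB T = (0:α → ZMod 2) then WW w T else 0)
      (fun T _ => by by_cases h : SB T = (0:α → ZMod 2) <;> simp [h, WW_nonneg hw]) hemp

lemma Z_vanish {E : Finset (Sym2 α)} {χ : α → ZMod 2} (v : α) (hχ : χ v ≠ 0)
    (hE : ∀ e ∈ E, v ∉ e) : Z w E χ = 0 := by
  apply Finset.sum_eq_zero
  intro T hT
  rw [if_neg]
  intro h
  apply hχ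
  rw [← h]
  exact SB_eq_zero_of_not_mem fun e he => hE e (Finset.mem_powerset.mp hT he)

/-- summing over an injection, with nonneg dominating function -/
lemma sum_le_sum_of_inj {β γ : Type*} [DecidableEq γ] (s : Finset β) (t : Finset γ)
    (f : β → ℝ) (g : γ → ℝ) (i : β → γ) (hmem : ∀ a ∈ s, i a ∈ t)
    (hinj : ∀ a ∈ s, ∀ b ∈ s, i a = i b → a = b)
    (hfg : ∀ a ∈ s, f a ≤ g (i a)) (hg : ∀ b ∈ t, 0 ≤ g b) :
    ∑ a ∈ s, f a ≤ ∑ b ∈ t, g b := by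
  calc ∑ a ∈ s, f a ≤ ∑ a ∈ s, g (i a) := Finset.sum_le_sum hfg
  _ = ∑ b ∈ s.image i, g b := (Finset.sum_image hinj).symm
  _ ≤ ∑ b ∈ t, g b := Finset.sum_le_sum_of_subset_of_nonneg
      (by intro b hb; obtain ⟨a, ha, rfl⟩ := Finset.mem_image.mp hb; exact hmem a ha)
      (fun b hb _ => hg b hb)

lemma weight_swap {T1 T2 η : Finset (Sym2 α)} (hη : η ⊆ symmDiff T1 T2) :
    WW w (symmDiff T1 η) * WW w (symmDiff T2 η) = WW w T1 * WW w T2 := by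
  have h1 : η \ T1 = η ∩ T2 := by
    ext e
    constructor
    · intro he
      rcases Finset.mem_sdiff.mp he with ⟨heη, he1⟩
      have := hη heη
      rw [Finset.mem_symmDiff] at this
      exact Finset.mem_inter.mpr ⟨heη, by tauto⟩
    · intro he
      rcases Finset.mem_inter.mp he with ⟨heη, he2⟩
      have := hη heη
      rw [Finset.mem_symmDiff] at this
      exact Finset.mem_sdiff.mpr ⟨heη, by tauto⟩
  have h2 : η \ T2 = η ∩ T1 := by
    ext e
    constructor
    · intro he
      rcases Finset.mem_sdiff.mp he with ⟨heη, he2⟩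
      have := hη heη
      rw [Finset.mem_symmDiff] at this
      exact Finset.mem_inter.mpr ⟨heη, by tauto⟩
    · intro he
      rcases Finset.mem_inter.mp he with ⟨heη, he1⟩
      have := hη heη
      rw [Finset.mem_symmDiff] at this
      exact Finset.mem_sdiff.mpr ⟨heη, by tauto⟩
  have key : ∀ T : Finset (Sym2 α), WW w (symmDiff T η) = WW w (T \ η) * WW w (η \ T) := by
    intro T
    have : symmDiff T η = (T \ η) ∪ (η \ T) := by
      ext e; rw [Finset.mem_symmDiff]; simp only [Finset.mem_union, Finset.mem_sdiff]
    have hd : Disjoint (T \ η) (η \ T) := by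
      rw [Finset.disjoint_left]
      intro e he1 he2
      exact (Finset.mem_sdiff.mp he2).2 (Finset.mem_sdiff.mp he1).1
    rw [this, WW, Finset.prod_union hd]; rfl
  have split : ∀ T : Finset (Sym2 α), WW w T = WW w (T \ η) * WW w (T ∩ η) := by
    intro T
    have hd : Disjoint (T \ η) (T ∩ η) := Finset.sdiff_disjoint.mono_right Finset.inter_subset_right
    have hu : (T \ η) ∪ (T ∩ η) = T := Finset.sdiff_union_inter T η
    calc WW w T = ∏ e ∈ (T \ η) ∪ (T ∩ η), w e := by rw [hu]; rfl
    _ = WW w (T \ η) * WW w (T ∩ η) := Finset.prod_union hd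
  rw [key T1, key T2, h1, h2, split T1, split T2]
  have e1 : η ∩ T2 = T2 ∩ η := Finset.inter_comm _ _
  have e2 : η ∩ T1 = T1 ∩ η := Finset.inter_comm _ _
  rw [e1, e2]
  ring


lemma exists_swapper {M : Finset (Sym2 α)} (hdiag : ∀ e ∈ M, ¬ e.IsDiag)
    {z : α} {A : Finset α} (hM : SB M = x1 z + xA A) :
    ∃ p : α × Finset (Sym2 α), p.1 ∈ A ∧ p.2 ⊆ M ∧ SB p.2 = xA A + x1 p.1 := by
  by_cases hzA : z ∈ A
  · exact ⟨(z, M), hzA, le_refl M, by rw [hM, add_comm]⟩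
  · have hMz : SB M z = 1 := by
      rw [hM]
      simp [Pi.add_apply, x1, xA, hzA]
    obtain ⟨u, huz, hu1, P, hPM, hP⟩ := exists_pathlike M hdiag z hMz
    have huA : u ∈ A := by
      have : SB M u = x1 z u + xA A u := by rw [hM]; rfl
      rw [hu1] at this
      simp only [x1, if_neg huz, zero_add] at this
      by_contra hc
      rw [xA, if_neg hc] at this
      exact one_ne_zero this
    refine ⟨(u, M \ P), huA, Finset.sdiff_subset, ?_⟩
    rw [SB_sdiff_of_subset hPM, hM, hP]
    funext zz
    show x1 z zz + xA A zz + (x1 z zz + x1 u zz) = xA A zz + x1 u zz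
    generalize x1 z zz = a
    generalize xA A zz = b
    generalize x1 u zz = c
    revert a b c; decide

/-- The core (switching-type) inequality. -/
lemma core_ineq (E : Finset (Sym2 α)) (hdiag : ∀ e ∈ E, ¬ e.IsDiag)
    (hw : ∀ e, 0 ≤ w e) (z : α) (A : Finset α) :
    Z w E (x1 z + xA A) * Z w E 0 ≤
      ∑ u ∈ A, Z w E (x1 z + x1 u) * Z w E (xA A + x1 u) := by
  classical
  set X : α → ZMod 2 := x1 z + xA A with hX
  -- pick function
  have pickex : ∀ M : Finset (Sym2 α), ∃ p : α × Finset (Sym2 α),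
      ((∀ e ∈ M, ¬ e.IsDiag) ∧ SB M = X) →
      (p.1 ∈ A ∧ p.2 ⊆ M ∧ SB p.2 = xA A + x1 p.1) := by
    intro M
    by_cases h : (∀ e ∈ M, ¬ e.IsDiag) ∧ SB M = X
    · obtain ⟨p, hp⟩ := exists_swapper h.1 h.2
      exact ⟨p, fun _ => hp⟩
    · exact ⟨(z, ∅), fun hc => absurd hc h⟩
  choose pick pickspec using pickex
  -- index sets
  set P : Finset (Finset (Sym2 α) × Finset (Sym2 α)) :=
    (E.powerset ×ˢ E.powerset).filter (fun p => SB p.1 = X ∧ SB p.2 = 0) with hP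
  set Q : Finset (α × (Finset (Sym2 α) × Finset (Sym2 α))) :=
    (A ×ˢ (E.powerset ×ˢ E.powerset)).filter
      (fun q => SB q.2.1 = x1 z + x1 q.1 ∧ SB q.2.2 = xA A + x1 q.1) with hQ
  have lhs_eq : Z w E X * Z w E 0 = ∑ p ∈ P, WW w p.1 * WW w p.2 := by
    rw [Z, Z, Finset.sum_mul_sum, hP]
    rw [Finset.sum_filter, Finset.sum_product]
    apply Finset.sum_congr rfl; intro T1 _
    apply Finset.sum_congr rfl; intro T2 _
    by_cases h1 : SB T1 = X <;> by_cases h2 : SB T2 = 0 <;> simp [h1, h2]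
  have rhs_eq : ∑ u ∈ A, Z w E (x1 z + x1 u) * Z w E (xA A + x1 u)
      = ∑ q ∈ Q, WW w q.2.1 * WW w q.2.2 := by
    rw [hQ, Finset.sum_filter, Finset.sum_product]
    apply Finset.sum_congr rfl; intro u _
    rw [Z, Z, Finset.sum_mul_sum, Finset.sum_product]
    apply Finset.sum_congr rfl; intro T1 _
    apply Finset.sum_congr rfl; intro T2 _
    by_cases h1 : SB T1 = x1 z + x1 u <;> by_cases h2 : SB T2 = xA A + x1 u <;> simp [h1, h2]
  rw [lhs_eq, rhs_eq]
  -- facts about members of P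
  have hPfact : ∀ p ∈ P, p.1 ⊆ E ∧ p.2 ⊆ E ∧ SB p.1 = X ∧ SB p.2 = 0 := by
    intro p hp
    rw [hP, Finset.mem_filter, Finset.mem_product] at hp
    exact ⟨Finset.mem_powerset.mp hp.1.1, Finset.mem_powerset.mp hp.1.2, hp.2.1, hp.2.2⟩
  have hMfact : ∀ p ∈ P, (∀ e ∈ symmDiff p.1 p.2, ¬ e.IsDiag) ∧ SB (symmDiff p.1 p.2) = X := by
    intro p hp
    obtain ⟨h1, h2, h3, h4⟩ := hPfact p hp
    constructor
    · intro e he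
      rw [Finset.mem_symmDiff] at he
      rcases he with ⟨he, _⟩ | ⟨he, _⟩
      · exact hdiag e (h1 he)
      · exact hdiag e (h2 he)
    · rw [SB_symmDiff, h3, h4, add_zero]
  -- the injection
  set i : Finset (Sym2 α) × Finset (Sym2 α) → α × (Finset (Sym2 α) × Finset (Sym2 α)) :=
    fun p => ((pick (symmDiff p.1 p.2)).1,
      (symmDiff p.1 (pick (symmDiff p.1 p.2)).2, symmDiff p.2 (pick (symmDiff p.1 p.2)).2)) with hi
  apply sum_le_sum_of_inj P Q _ _ i
  · -- membership
    intro p hp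
    obtain ⟨hps, hηM, hηSB⟩ := pickspec (symmDiff p.1 p.2) (hMfact p hp)
    obtain ⟨h1, h2, h3, h4⟩ := hPfact p hp
    have hηE : (pick (symmDiff p.1 p.2)).2 ⊆ E := by
      intro e he
      have := hηM he
      rw [Finset.mem_symmDiff] at this
      rcases this with ⟨he', _⟩ | ⟨he', _⟩
      · exact h1 he'
      · exact h2 he'
    rw [hQ, Finset.mem_filter, Finset.mem_product, Finset.mem_product]
    refine ⟨⟨hps, ?_, ?_⟩, ?_, ?_⟩
    · exact Finset.mem_powerset.mpr (fun e he => by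
        rw [Finset.mem_symmDiff] at he
        rcases he with ⟨he', _⟩ | ⟨he', _⟩
        · exact h1 he'
        · exact hηE he')
    · exact Finset.mem_powerset.mpr (fun e he => by
        rw [Finset.mem_symmDiff] at he
        rcases he with ⟨he', _⟩ | ⟨he', _⟩
        · exact h2 he'
        · exact hηE he')
    · show SB (symmDiff p.1 (pick (symmDiff p.1 p.2)).2) = _
      rw [SB_symmDiff, h3, hηSB]
      funext zz
      show (x1 z zz + xA A zz) + (xA A zz + x1 (pick (symmDiff p.1 p.2)).1 zz)
        = x1 z zz + x1 (pick (symmDiff p.1 p.2)).1 zz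
      generalize x1 z zz = a
      generalize xA A zz = b
      generalize x1 (pick (symmDiff p.1 p.2)).1 zz = c
      revert a b c; decide
    · show SB (symmDiff p.2 (pick (symmDiff p.1 p.2)).2) = _
      rw [SB_symmDiff, h4, zero_add, hηSB]
  · -- injectivity
    intro p hp q hq hpq
    obtain ⟨_, hηMp, _⟩ := pickspec (symmDiff p.1 p.2) (hMfact p hp)
    obtain ⟨_, hηMq, _⟩ := pickspec (symmDiff q.1 q.2) (hMfact q hq)
    have hM : symmDiff p.1 p.2 = symmDiff q.1 q.2 := by
      have h1 := congrArg (fun r => symmDiff r.2.1 r.2.2) hpq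
      calc symmDiff p.1 p.2
          = symmDiff (symmDiff p.1 (pick (symmDiff p.1 p.2)).2)
              (symmDiff p.2 (pick (symmDiff p.1 p.2)).2) := by
            rw [symmDiff_symmDiff_symmDiff_comm, symmDiff_self, symmDiff_bot]
      _ = symmDiff (symmDiff q.1 (pick (symmDiff q.1 q.2)).2)
              (symmDiff q.2 (pick (symmDiff q.1 q.2)).2) := h1
      _ = symmDiff q.1 q.2 := by
            rw [symmDiff_symmDiff_symmDiff_comm, symmDiff_self, symmDiff_bot]
    have hη : (pick (symmDiff p.1 p.2)).2 = (pick (symmDiff q.1 q.2)).2 := by rw [hM]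
    have h21 := congrArg (fun r => r.2.1) hpq
    have h22 := congrArg (fun r => r.2.2) hpq
    simp only [hi] at h21 h22
    rw [hη] at h21 h22
    have e1 : p.1 = q.1 := by
      have := congrArg (fun s => symmDiff s (pick (symmDiff q.1 q.2)).2) h21
      simpa [symmDiff_symmDiff_cancel_right] using this
    have e2 : p.2 = q.2 := by
      have := congrArg (fun s => symmDiff s (pick (symmDiff q.1 q.2)).2) h22
      simpa [symmDiff_symmDiff_cancel_right] using this
    exact Prod.ext e1 e2
  · -- weights
    intro p hp
    obtain ⟨_, hηM, _⟩ := pickspec (symmDiff p.1 p.2) (hMfact p hp)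
    exact le_of_eq (weight_swap hηM).symm
  · -- nonneg
    intro q _
    exact mul_nonneg (WW_nonneg hw _) (WW_nonneg hw _)


lemma x2_eq (a b : α) : x2 a b = x1 a + x1 b := rfl

lemma pi_add_cancel (f g : α → ZMod 2) : (f + g = 0) ↔ (f = g) := by
  constructor
  · intro h; funext v
    have := congrFun h v
    simp only [Pi.add_apply, Pi.zero_apply] at this
    revert this
    generalize f v = a
    generalize g v = b
    revert a b; decide
  · intro h; subst h; funext v
    simp [CharTwo.add_self_eq_zero]

/-- decomposition of `Z` over a partition of the edge set. -/
lemma Z_decompose {E1 E2 : Finset (Sym2 α)} (hd : Disjoint E1 E2) (χ : α → ZMod 2) :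
    Z w (E1 ∪ E2) χ = ∑ S ∈ E2.powerset, WW w S * Z w E1 (χ + SB S) := by
  classical
  have rhs : ∑ S ∈ E2.powerset, WW w S * Z w E1 (χ + SB S)
      = ∑ q ∈ E2.powerset ×ˢ E1.powerset,
          (if SB q.2 = χ + SB q.1 then WW w q.1 * WW w q.2 else 0) := by
    rw [Finset.sum_product]
    apply Finset.sum_congr rfl; intro S _
    rw [Z, Finset.mul_sum]
    apply Finset.sum_congr rfl; intro T _
    by_cases h : SB T = χ + SB S <;> simp [h]
  rw [rhs, Z]
  apply Finset.sum_nbij' (i := fun T => (T ∩ E2, T ∩ E1)) (j := fun q => q.1 ∪ q.2)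
  · intro T hT
    rw [Finset.mem_powerset] at hT
    rw [Finset.mem_product, Finset.mem_powerset, Finset.mem_powerset]
    exact ⟨Finset.inter_subset_right, Finset.inter_subset_right⟩
  · intro q hq
    rw [Finset.mem_product, Finset.mem_powerset, Finset.mem_powerset] at hq
    rw [Finset.mem_powerset]
    exact Finset.union_subset (hq.1.trans Finset.subset_union_right)
      (hq.2.trans Finset.subset_union_left)
  · intro T hT
    rw [Finset.mem_powerset] at hT
    rw [← Finset.inter_union_distrib_left]
    rw [Finset.union_comm E2 E1]
    exact Finset.inter_eq_left.mpr hT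
  · intro q hq
    rw [Finset.mem_product, Finset.mem_powerset, Finset.mem_powerset] at hq
    have h1 : (q.1 ∪ q.2) ∩ E2 = q.1 := by
      rw [Finset.union_inter_distrib_right]
      rw [Finset.inter_eq_left.mpr hq.1]
      rw [Finset.disjoint_iff_inter_eq_empty.mp (Finset.disjoint_of_subset_left hq.2 hd)]
      exact Finset.union_empty q.1
    have h2 : (q.1 ∪ q.2) ∩ E1 = q.2 := by
      rw [Finset.union_inter_distrib_right]
      rw [Finset.inter_eq_left.mpr hq.2]
      rw [Finset.disjoint_iff_inter_eq_empty.mp (Finset.disjoint_of_subset_left hq.1 hd.symm)]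
      exact Finset.empty_union q.2
    rw [h1, h2]
  · intro T hT
    rw [Finset.mem_powerset] at hT
    have hdT : Disjoint (T ∩ E1) (T ∩ E2) :=
      Finset.disjoint_of_subset_left Finset.inter_subset_right
        (Finset.disjoint_of_subset_right Finset.inter_subset_right hd)
    have hTu : T ∩ E1 ∪ T ∩ E2 = T := by
      rw [← Finset.inter_union_distrib_left]
      exact Finset.inter_eq_left.mpr hT
    have hSBsplit : SB T = SB (T ∩ E1) + SB (T ∩ E2) := by
      rw [← hTu, SB_union_of_disjoint hdT]
      rw [hTu]
    have hcond : (SB T = χ) ↔ (SB (T ∩ E1) = χ + SB (T ∩ E2)) := by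
      rw [hSBsplit]
      constructor
      · intro h
        funext v
        have := congrFun h v
        simp only [Pi.add_apply] at this ⊢
        revert this
        generalize SB (T ∩ E1) v = a
        generalize SB (T ∩ E2) v = b
        generalize χ v = c
        revert a b c; decide
      · intro h
        rw [h]
        funext v
        simp only [Pi.add_apply]
        generalize SB (T ∩ E2) v = b
        generalize χ v = c
        revert b c; decide
    have hWW : WW w T = WW w (T ∩ E2) * WW w (T ∩ E1) := by
      rw [← hTu, WW, Finset.prod_union hdT]
      rw [hTu, mul_comm]
      rfl
    rw [← hWW]
    by_cases h : SB T = χ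
    · rw [if_pos h, if_pos (hcond.mp h)]
    · rw [if_neg h, if_neg (fun hc => h (hcond.mpr hc))]

/-- The edge set of a finite volume. -/
def ES (Λ : Finset α) : Finset (Sym2 α) := Λ.sym2.filter (fun e => ¬ e.IsDiag)

lemma mem_ES {Λ : Finset α} {e : Sym2 α} : e ∈ ES Λ ↔ (∀ a ∈ e, a ∈ Λ) ∧ ¬ e.IsDiag := by
  rw [ES, Finset.mem_filter, Finset.mem_sym2_iff]

lemma ES_nondiag {Λ : Finset α} : ∀ e ∈ ES Λ, ¬ e.IsDiag := fun e he => (mem_ES.mp he).2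

lemma ES_mono {B Λ : Finset α} (h : B ⊆ Λ) : ES B ⊆ ES Λ := by
  intro e he
  rw [mem_ES] at he ⊢
  exact ⟨fun a ha => h (he.1 a ha), he.2⟩

lemma SB_support_ES {Λ : Finset α} {S : Finset (Sym2 α)} (hS : S ⊆ ES Λ) {v : α}
    (hv : v ∉ Λ) : SB S v = 0 :=
  SB_eq_zero_of_not_mem fun e he hve => hv ((mem_ES.mp (hS he)).1 v hve)


lemma zmod2_cases (a : ZMod 2) : a = 0 ∨ a = 1 := by revert a; decide

lemma xA_filter {Λ : Finset α} (f : α → ZMod 2) (hsupp : ∀ v, v ∉ Λ → f v = 0) :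
    xA (Λ.filter (fun v => f v = 1)) = f := by
  funext v
  by_cases hv : v ∈ Λ
  · by_cases h1 : f v = 1
    · have : v ∈ Λ.filter (fun v => f v = 1) := Finset.mem_filter.mpr ⟨hv, h1⟩
      simp only [xA, if_pos this, h1]
    · have h0 : f v = 0 := (zmod2_cases (f v)).resolve_right h1
      have : v ∉ Λ.filter (fun v => f v = 1) := fun hc => h1 (Finset.mem_filter.mp hc).2
      simp only [xA, if_neg this, h0]
  · have : v ∉ Λ.filter (fun v => f v = 1) := fun hc => hv (Finset.mem_filter.mp hc).1
    simp only [xA, if_neg this, hsupp v hv]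

/-- The Simon-Lieb inequality in the even-subgraph representation. -/
theorem star {B Λ : Finset α} (hBΛ : B ⊆ Λ) (hw : ∀ e, 0 ≤ w e)
    {z x : α} (hz : z ∈ B) (hx : x ∈ Λ) (hxB : x ∉ B) :
    Z w (ES Λ) (x2 z x) * Z w (ES B) 0 ≤
      ∑ p ∈ B ×ˢ (Λ \ B),
        Z w (ES B) (x2 z p.1) * (w s(p.1, p.2) * Z w (ES Λ) (x2 x p.2)) := by
  classical
  set EB := ES B with hEB
  set EL := ES Λ with hEL
  set ER := EL \ EB with hER
  have hsub : EB ⊆ EL := ES_mono hBΛ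
  have hdisj : Disjoint EB ER := Finset.disjoint_sdiff
  have hcup : EB ∪ ER = EL := Finset.union_sdiff_of_subset hsub
  have hERL : ER ⊆ EL := Finset.sdiff_subset
  -- the B-boundary of a crossing configuration
  set AS : Finset (Sym2 α) → Finset α :=
    fun S => Λ.filter (fun v => (x1 x + SB S) v = 1) with hASdef
  have hAS : ∀ S ∈ ER.powerset, xA (AS S) = x1 x + SB S := by
    intro S hS
    apply xA_filter
    intro v hv
    have h1 : x1 x v = 0 := by rw [x1, if_neg (fun hc => hv (by rw [hc]; exact hx))]
    have h2 : SB S v = 0 :=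
      SB_support_ES ((Finset.mem_powerset.mp hS).trans hERL) hv
    simp [Pi.add_apply, h1, h2]
  have hsplit : ∀ S ∈ ER.powerset, x2 z x + SB S = x1 z + xA (AS S) := by
    intro S hS
    rw [hAS S hS]
    funext v
    show x1 z v + x1 x v + SB S v = x1 z v + (x1 x v + SB S v)
    rw [add_assoc]
  -- Step 1: decompose over crossing configurations and apply the core inequality
  have step1 : Z w EL (x2 z x) * Z w EB 0
      ≤ ∑ S ∈ ER.powerset, WW w S *
          ∑ u ∈ AS S, Z w EB (x1 z + x1 u) * Z w EB (xA (AS S) + x1 u) := by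
    rw [← hcup, Z_decompose hdisj, Finset.sum_mul]
    apply Finset.sum_le_sum
    intro S hS
    rw [mul_assoc]
    apply mul_le_mul_of_nonneg_left _ (WW_nonneg hw S)
    rw [hsplit S hS]
    exact core_ineq EB (ES_nondiag) hw z (AS S)
  -- Step 2: replace vertex sum by crossing-pair sum
  have step2 : ∀ S ∈ ER.powerset,
      ∑ u ∈ AS S, Z w EB (x1 z + x1 u) * Z w EB (xA (AS S) + x1 u)
      ≤ ∑ p ∈ B ×ˢ (Λ \ B), if s(p.1, p.2) ∈ S then
          Z w EB (x1 z + x1 p.1) * Z w EB (xA (AS S) + x1 p.1) else 0 := by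
    intro S hS
    have hSER : S ⊆ ER := Finset.mem_powerset.mp hS
    -- terms with u ∉ B vanish
    have hvanish : ∀ u ∈ AS S, u ∉ B → Z w EB (x1 z + x1 u) = 0 := by
      intro u _ huB
      apply Z_vanish u
      · have huz : u ≠ z := fun hc => huB (by rw [hc]; exact hz)
        simp [Pi.add_apply, x1, huz]
      · intro e he hue
        exact huB ((mem_ES.mp he).1 u hue)
    have hrestrict : ∑ u ∈ AS S, Z w EB (x1 z + x1 u) * Z w EB (xA (AS S) + x1 u)
        = ∑ u ∈ (AS S).filter (· ∈ B),
            Z w EB (x1 z + x1 u) * Z w EB (xA (AS S) + x1 u) := by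
      refine (Finset.sum_subset (Finset.filter_subset _ _) ?_).symm
      intro u hu hnot
      have huB : u ∉ B := fun hc => hnot (Finset.mem_filter.mpr ⟨hu, hc⟩)
      rw [hvanish u hu huB, zero_mul]
    rw [hrestrict]
    -- each u ∈ AS S ∩ B has a crossing edge in S
    have hcross : ∀ u, ∃ v, u ∈ (AS S).filter (· ∈ B) →
        (v ∈ Λ \ B ∧ s(u, v) ∈ S) := by
      intro u
      by_cases hu : u ∈ (AS S).filter (· ∈ B)
      · obtain ⟨huA, huB⟩ := Finset.mem_filter.mp hu
        have hux : x1 x u = 0 := by rw [x1, if_neg (fun hc => hxB (by rw [← hc]; exact huB))]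
        have hSBu : SB S u = 1 := by
          have := (Finset.mem_filter.mp huA).2
          rwa [Pi.add_apply, hux, zero_add] at this
        obtain ⟨e, heS, hue⟩ := exists_edge_of_SB_ne_zero (by rw [hSBu]; exact one_ne_zero)
        set v := Sym2.Mem.other hue with hvdef
        have hsuv : s(u, v) = e := Sym2.other_spec hue
        have heER : e ∈ ER := hSER heS
        have heEL : e ∈ EL := hERL heER
        have hvL : v ∈ Λ := (mem_ES.mp heEL).1 v (by rw [← hsuv]; simp)
        have hvB : v ∉ B := by
          intro hvB
          apply (Finset.mem_sdiff.mp heER).2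
          rw [← hsuv, hEB, mem_ES]
          constructor
          · intro a ha
            rcases Sym2.mem_iff.mp ha with rfl | rfl
            · exact huB
            · exact hvB
          · rw [← hsuv] at heEL
            exact (mem_ES.mp heEL).2
        exact ⟨v, fun _ => ⟨Finset.mem_sdiff.mpr ⟨hvL, hvB⟩, by rw [hsuv]; exact heS⟩⟩
      · exact ⟨x, fun hc => absurd hc hu⟩
    choose pv hpv using hcross
    apply sum_le_sum_of_inj _ _ _ _ (fun u => (u, pv u))
    · intro u hu
      rw [Finset.mem_product]
      exact ⟨(Finset.mem_filter.mp hu).2, (hpv u hu).1⟩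
    · intro a _ b _ hab
      exact (Prod.mk.injEq _ _ _ _).mp hab |>.1
    · intro u hu
      rw [if_pos (hpv u hu).2]
    · intro p _
      by_cases h : s(p.1, p.2) ∈ S
      · rw [if_pos h]
        exact mul_nonneg (Z_nonneg hw _ _) (Z_nonneg hw _ _)
      · rw [if_neg h]
  -- combine and swap the sums
  have step3 : Z w EL (x2 z x) * Z w EB 0
      ≤ ∑ p ∈ B ×ˢ (Λ \ B), ∑ S ∈ ER.powerset, WW w S *
          (if s(p.1, p.2) ∈ S then
            Z w EB (x1 z + x1 p.1) * Z w EB (xA (AS S) + x1 p.1) else 0) := by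
    refine le_trans step1 ?_
    rw [Finset.sum_comm]
    apply Finset.sum_le_sum
    intro S hS
    rw [← Finset.mul_sum]
    exact mul_le_mul_of_nonneg_left (step2 S hS) (WW_nonneg hw S)
  refine le_trans step3 ?_
  -- Step 4: for each crossing pair, pull out the crossing edge
  apply Finset.sum_le_sum
  rintro ⟨u, v⟩ hp
  rw [Finset.mem_product] at hp
  obtain ⟨huB, hv⟩ := hp
  rw [Finset.mem_sdiff] at hv
  obtain ⟨hvL, hvB⟩ := hv
  have huv : u ≠ v := fun hc => hvB (by rw [← hc]; exact huB)
  set e := s(u, v) with hedef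
  have heEL : e ∈ EL := by
    rw [hEL, mem_ES]
    constructor
    · intro a ha
      rcases Sym2.mem_iff.mp ha with rfl | rfl
      · exact hBΛ huB
      · exact hvL
    · rw [Sym2.mk_isDiag_iff]
      exact huv
  have heER : e ∈ ER := by
    rw [hER, Finset.mem_sdiff]
    refine ⟨heEL, fun hc => hvB ((mem_ES.mp hc).1 v (by simp [hedef]))⟩
  -- only S containing e contribute
  have hfilter : ∑ S ∈ ER.powerset, WW w S *
      (if e ∈ S then Z w EB (x1 z + x1 u) * Z w EB (xA (AS S) + x1 u) else 0)
      = ∑ S ∈ (ER.powerset).filter (e ∈ ·), WW w S *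
          (Z w EB (x1 z + x1 u) * Z w EB (xA (AS S) + x1 u)) := by
    rw [Finset.sum_filter]
    apply Finset.sum_congr rfl
    intro S _
    by_cases h : e ∈ S <;> simp [h]
  rw [hfilter]
  -- reindex by removing the edge e
  have hreindex : ∑ S ∈ (ER.powerset).filter (e ∈ ·), WW w S *
      (Z w EB (x1 z + x1 u) * Z w EB (xA (AS S) + x1 u))
      = ∑ S' ∈ (ER.erase e).powerset, (w e * WW w S') *
          (Z w EB (x1 z + x1 u) * Z w EB (xA (AS (insert e S')) + x1 u)) := by
    apply Finset.sum_nbij' (i := fun S => S.erase e) (j := fun S' => insert e S')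
    · intro S hS
      rw [Finset.mem_filter, Finset.mem_powerset] at hS
      rw [Finset.mem_powerset]
      exact fun f hf => Finset.mem_erase.mpr
        ⟨(Finset.mem_erase.mp hf).1, hS.1 (Finset.mem_erase.mp hf).2⟩
    · intro S' hS'
      rw [Finset.mem_powerset] at hS'
      rw [Finset.mem_filter, Finset.mem_powerset]
      exact ⟨Finset.insert_subset heER (hS'.trans (Finset.erase_subset e ER)),
        Finset.mem_insert_self e S'⟩
    · intro S hS
      rw [Finset.mem_filter] at hS
      exact Finset.insert_erase hS.2
    · intro S' hS'
      rw [Finset.mem_powerset] at hS'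
      exact Finset.erase_insert (fun hc => Finset.notMem_erase e ER (hS' hc))
    · intro S hS
      rw [Finset.mem_filter, Finset.mem_powerset] at hS
      rw [Finset.insert_erase hS.2]
      have hWW : WW w S = w e * WW w (S.erase e) := by
        rw [WW, WW, ← Finset.prod_insert (Finset.notMem_erase e S),
          Finset.insert_erase hS.2]
      rw [hWW]
  rw [hreindex]
  -- rewrite the source after removing the crossing edge
  have hsource : ∀ S' ∈ (ER.erase e).powerset,
      xA (AS (insert e S')) + x1 u = x2 x v + SB S' := by
    intro S' hS'
    have hS'ER : S' ⊆ ER := (Finset.mem_powerset.mp hS').trans (Finset.erase_subset e ER)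
    have heS' : e ∉ S' := fun hc => Finset.notMem_erase e ER ((Finset.mem_powerset.mp hS') hc)
    have hins : insert e S' ∈ ER.powerset :=
      Finset.mem_powerset.mpr (Finset.insert_subset heER hS'ER)
    have hse : SB {e} = x2 u v := by rw [hedef]; exact SB_singleton_nondiag huv
    rw [hAS _ hins, SB_insert heS', hse]
    funext zz
    show x1 x zz + (x2 u v zz + SB S' zz) + x1 u zz = x1 x zz + x1 v zz + SB S' zz
    rw [x2]
    generalize x1 x zz = a
    generalize x1 u zz = b
    generalize x1 v zz = c
    generalize SB S' zz = d
    revert a b c d; decide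
  have hbound : ∑ S' ∈ (ER.erase e).powerset, (w e * WW w S') *
      (Z w EB (x1 z + x1 u) * Z w EB (xA (AS (insert e S')) + x1 u))
      ≤ Z w EB (x2 z u) * (w e * Z w EL (x2 x v)) := by
    have hZdec : Z w EL (x2 x v) = ∑ S' ∈ ER.powerset, WW w S' * Z w EB (x2 x v + SB S') := by
      rw [← hcup]
      exact Z_decompose hdisj _
    calc ∑ S' ∈ (ER.erase e).powerset, (w e * WW w S') *
        (Z w EB (x1 z + x1 u) * Z w EB (xA (AS (insert e S')) + x1 u))
        = ∑ S' ∈ (ER.erase e).powerset, (w e * Z w EB (x2 z u)) *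
            (WW w S' * Z w EB (x2 x v + SB S')) := by
          apply Finset.sum_congr rfl
          intro S' hS'
          rw [hsource S' hS', x2_eq, x2_eq]
          ring
      _ ≤ ∑ S' ∈ ER.powerset, (w e * Z w EB (x2 z u)) *
            (WW w S' * Z w EB (x2 x v + SB S')) := by
          apply Finset.sum_le_sum_of_subset_of_nonneg
            (Finset.powerset_mono.mpr (Finset.erase_subset e ER))
          intro S' _ _
          have h0 : 0 ≤ w e * Z w EB (x2 z u) := mul_nonneg (hw e) (Z_nonneg hw _ _)
          exact mul_nonneg h0 (mul_nonneg (WW_nonneg hw _) (Z_nonneg hw _ _))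
      _ = Z w EB (x2 z u) * (w e * Z w EL (x2 x v)) := by
          rw [← Finset.mul_sum, ← hZdec]
          ring
  exact hbound

end LR

section Expansion

open scoped Classical

open LR

variable (β : ℝ) (J : V d → V d → ℝ) (hJs : ∀ u v, J u v = J v u)

/-- coupling on unordered pairs -/
def KK : Sym2 (V d) → ℝ :=
  Sym2.lift ⟨fun u v => β * J u v, fun u v => by dsimp only; rw [hJs]⟩

/-- edge weight -/
def wt : Sym2 (V d) → ℝ := fun e => Real.tanh (KK β J hJs e)

lemma spin_sq (b : Bool) : spin b * spin b = 1 := by cases b <;> simp [spin]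

lemma spin_cases (b : Bool) : spin b = 1 ∨ spin b = -1 := by cases b <;> simp [spin]

lemma wt_nonneg (hβ : 0 ≤ β) (hJ : ∀ u v, 0 ≤ J u v) : ∀ e, 0 ≤ wt β J hJs e := by
  intro e
  induction e with
  | _ u v =>
    show 0 ≤ Real.tanh (KK β J hJs s(u, v))
    rw [KK, Sym2.lift_mk]
    have h : 0 ≤ β * J u v := mul_nonneg hβ (hJ u v)
    rw [Real.tanh_eq_sinh_div_cosh]
    exact div_nonneg (Real.sinh_nonneg_iff.mpr h) (Real.cosh_pos _).le

variable (Λ : Finset (V d))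

/-- spin field extended to the whole lattice -/
def sp (φ : ↥Λ → Bool) (v : V d) : ℝ := if h : v ∈ Λ then spin (φ ⟨v, h⟩) else 1

/-- product of the spins at the two endpoints of an edge -/
def XX (φ : ↥Λ → Bool) : Sym2 (V d) → ℝ :=
  Sym2.lift ⟨fun u v => sp Λ φ u * sp Λ φ v, fun u v => mul_comm _ _⟩

lemma sp_cases (φ : ↥Λ → Bool) (v : V d) : sp Λ φ v = 1 ∨ sp Λ φ v = -1 := by
  rw [sp]
  split
  · exact spin_cases _
  · exact Or.inl rfl

lemma XX_cases (φ : ↥Λ → Bool) (e : Sym2 (V d)) : XX Λ φ e = 1 ∨ XX Λ φ e = -1 := by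
  induction e with
  | _ u v =>
    rw [XX, Sym2.lift_mk]
    rcases sp_cases Λ φ u with h1 | h1 <;> rcases sp_cases Λ φ v with h2 | h2 <;>
      simp [h1, h2]

lemma hamiltonian_expand (φ : ↥Λ → Bool) :
    -(β * isingH Λ J φ) = ∑ e ∈ LR.ES Λ, KK β J hJs e * XX Λ φ e := by
  classical
  set D : Finset (↥Λ × ↥Λ) :=
    (Finset.univ ×ˢ Finset.univ).filter (fun p => p.1.1 ≠ p.2.1) with hD
  set F : ↥Λ × ↥Λ → ℝ :=
    fun p => β * J p.1.1 p.2.1 * (spin (φ p.1) * spin (φ p.2)) with hF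
  have step0 : -(β * isingH Λ J φ) = (1/2) * ∑ p ∈ D, F p := by
    rw [isingH]
    have harith : ∀ S : ℝ, -(β * (-(1 / 2) * S)) = (1/2) * (β * S) := fun S => by ring
    rw [harith]
    have hmul : β * (∑ u : ↥Λ, ∑ v : ↥Λ,
        if u.1 ≠ v.1 then J u.1 v.1 * spin (φ u) * spin (φ v) else 0)
        = ∑ u : ↥Λ, ∑ v : ↥Λ,
            if u.1 ≠ v.1 then β * J u.1 v.1 * (spin (φ u) * spin (φ v)) else 0 := by
      rw [Finset.mul_sum]
      refine Finset.sum_congr rfl fun u _ => ?_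
      rw [Finset.mul_sum]
      refine Finset.sum_congr rfl fun v _ => ?_
      by_cases h : u.1 ≠ v.1
      · rw [if_pos h, if_pos h]; ring
      · rw [if_neg h, if_neg h]; ring
    rw [hmul]
    congr 1
    rw [hD, Finset.sum_filter]
    exact (Finset.sum_product' Finset.univ Finset.univ
      (fun u v : ↥Λ => if u.1 ≠ v.1 then β * J u.1 v.1 * (spin (φ u) * spin (φ v)) else 0)).symm
  rw [step0]
  have maps : ∀ p ∈ D, s(p.1.1, p.2.1) ∈ LR.ES Λ := by
    intro p hp
    rw [hD, Finset.mem_filter] at hp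
    rw [LR.mem_ES]
    constructor
    · intro a ha
      rcases Sym2.mem_iff.mp ha with rfl | rfl
      · exact p.1.2
      · exact p.2.2
    · rw [Sym2.mk_isDiag_iff]; exact hp.2
  rw [← Finset.sum_fiberwise_of_maps_to maps F, Finset.mul_sum]
  apply Finset.sum_congr rfl
  intro e he
  induction e with
  | _ u0 v0 =>
    rw [LR.mem_ES] at he
    have hu0 : u0 ∈ Λ := he.1 u0 (by simp)
    have hv0 : v0 ∈ Λ := he.1 v0 (by simp)
    have hne : u0 ≠ v0 := by
      intro h; exact he.2 (by rw [Sym2.mk_isDiag_iff]; exact h)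
    set a : ↥Λ := ⟨u0, hu0⟩
    set b : ↥Λ := ⟨v0, hv0⟩
    have hfiber : D.filter (fun p => s(p.1.1, p.2.1) = s(u0, v0)) = {(a, b), (b, a)} := by
      ext p
      rw [Finset.mem_filter, hD, Finset.mem_filter]
      constructor
      · rintro ⟨⟨-, hne'⟩, heq⟩
        rcases Sym2.eq_iff.mp heq with ⟨h1, h2⟩ | ⟨h1, h2⟩
        · exact Finset.mem_insert.mpr (Or.inl (Prod.ext (Subtype.ext h1) (Subtype.ext h2)))
        · exact Finset.mem_insert.mpr (Or.inr (Finset.mem_singleton.mpr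
            (Prod.ext (Subtype.ext h1) (Subtype.ext h2))))
      · intro hp
        rcases Finset.mem_insert.mp hp with rfl | hp
        · exact ⟨⟨Finset.mem_product.mpr ⟨Finset.mem_univ _, Finset.mem_univ _⟩, hne⟩,
            rfl⟩
        · rw [Finset.mem_singleton] at hp
          subst hp
          refine ⟨⟨Finset.mem_product.mpr ⟨Finset.mem_univ _, Finset.mem_univ _⟩, ?_⟩, ?_⟩
          · exact fun h => hne h.symm
          · rw [Sym2.eq_swap]
    rw [hfiber]
    have hpairne : (a, b) ≠ (b, a) := by
      intro h
      exact hne (congrArg (fun q => q.1.1) h)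
    rw [Finset.sum_pair hpairne]
    have hKX : KK β J hJs s(u0, v0) * XX Λ φ s(u0, v0)
        = β * J u0 v0 * (spin (φ a) * spin (φ b)) := by
      rw [KK, Sym2.lift_mk, XX, Sym2.lift_mk]
      have h1 : sp Λ φ u0 = spin (φ a) := dif_pos hu0
      have h2 : sp Λ φ v0 = spin (φ b) := dif_pos hv0
      show β * J u0 v0 * (sp Λ φ u0 * sp Λ φ v0) = _
      rw [h1, h2]
    have hFa : F (a, b) = β * J u0 v0 * (spin (φ a) * spin (φ b)) := rfl
    have hFb : F (b, a) = β * J u0 v0 * (spin (φ a) * spin (φ b)) := by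
      show β * J v0 u0 * (spin (φ b) * spin (φ a)) = _
      rw [hJs v0 u0]; ring
    rw [hFa, hFb, hKX]
    ring


lemma exp_edge (k y : ℝ) (hy : y = 1 ∨ y = -1) :
    Real.exp (k * y) = Real.cosh k * (1 + Real.tanh k * y) := by
  have hc := Real.cosh_pos k
  rcases hy with rfl | rfl
  · rw [mul_one, mul_one, Real.tanh_eq_sinh_div_cosh, mul_add, mul_one,
      mul_div_assoc', mul_div_cancel_left₀ _ hc.ne', Real.cosh_add_sinh]
  · rw [mul_neg_one, mul_neg_one, ← sub_eq_add_neg, Real.tanh_eq_sinh_div_cosh, mul_sub,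
      mul_one, mul_div_assoc', mul_div_cancel_left₀ _ hc.ne', Real.cosh_sub_sinh]

/-- the count of appearances of a site: twice the edge degree plus endpoint indicators -/
def mT (a b : ↥Λ) (T : Finset (Sym2 (V d))) (v : ↥Λ) : ℕ :=
  (if v = a then 1 else 0) + (if v = b then 1 else 0) + (T.filter (fun e => v.1 ∈ e)).card

lemma edge_prod_eq (φ : ↥Λ → Bool) {e : Sym2 (V d)} (he : e ∈ LR.ES Λ) :
    XX Λ φ e = ∏ v : ↥Λ, spin (φ v) ^ (if v.1 ∈ e then 1 else 0) := by
  classical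
  induction e with
  | _ u0 v0 =>
    rw [LR.mem_ES] at he
    have hu0 : u0 ∈ Λ := he.1 u0 (by simp)
    have hv0 : v0 ∈ Λ := he.1 v0 (by simp)
    have hne : u0 ≠ v0 := fun h => he.2 (by rw [Sym2.mk_isDiag_iff]; exact h)
    set a : ↥Λ := ⟨u0, hu0⟩
    set b : ↥Λ := ⟨v0, hv0⟩
    have hsplit : ∀ v : ↥Λ, (if v.1 ∈ s(u0, v0) then 1 else 0)
        = (if v = a then 1 else 0) + (if v = b then 1 else 0) := by
      intro v
      by_cases hva : v = a
      · have : v.1 ∈ s(u0, v0) := by rw [hva]; simp; exact Or.inl rfl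
        have hvb : v ≠ b := by
          rw [hva]; intro h
          exact hne (congrArg Subtype.val h)
        rw [if_pos this, if_pos hva, if_neg hvb]
      · by_cases hvb : v = b
        · have : v.1 ∈ s(u0, v0) := by rw [hvb]; simp; exact Or.inr rfl
          rw [if_pos this, if_neg hva, if_pos hvb]
        · have : v.1 ∉ s(u0, v0) := by
            rw [Sym2.mem_iff]
            rintro (h | h)
            · exact hva (Subtype.ext h)
            · exact hvb (Subtype.ext h)
          rw [if_neg this, if_neg hva, if_neg hvb]
    calc XX Λ φ s(u0, v0) = sp Λ φ u0 * sp Λ φ v0 := by rw [XX, Sym2.lift_mk]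
    _ = spin (φ a) * spin (φ b) := by rw [sp, sp, dif_pos hu0, dif_pos hv0]
    _ = (∏ v : ↥Λ, spin (φ v) ^ (if v = a then 1 else 0)) *
          (∏ v : ↥Λ, spin (φ v) ^ (if v = b then 1 else 0)) := by
        congr 1
        · rw [show (∏ v : ↥Λ, spin (φ v) ^ (if v = a then 1 else 0))
              = ∏ v : ↥Λ, (if v = a then spin (φ v) else 1) from
            Finset.prod_congr rfl (fun v _ => by by_cases h : v = a <;> simp [h])]
          rw [Finset.prod_ite_eq']
          simp
        · rw [show (∏ v : ↥Λ, spin (φ v) ^ (if v = b then 1 else 0))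
              = ∏ v : ↥Λ, (if v = b then spin (φ v) else 1) from
            Finset.prod_congr rfl (fun v _ => by by_cases h : v = b <;> simp [h])]
          rw [Finset.prod_ite_eq']
          simp
    _ = ∏ v : ↥Λ, spin (φ v) ^ ((if v = a then 1 else 0) + (if v = b then 1 else 0)) := by
        rw [← Finset.prod_mul_distrib]
        exact Finset.prod_congr rfl fun v _ => by rw [pow_add]
    _ = ∏ v : ↥Λ, spin (φ v) ^ (if v.1 ∈ s(u0, v0) then 1 else 0) := by
        exact Finset.prod_congr rfl fun v _ => by rw [hsplit v]

lemma integrand_eq (φ : ↥Λ → Bool) (a b : ↥Λ) {T : Finset (Sym2 (V d))}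
    (hT : T ⊆ LR.ES Λ) :
    spin (φ a) * spin (φ b) * ∏ e ∈ T, XX Λ φ e
      = ∏ v : ↥Λ, spin (φ v) ^ (mT Λ a b T v) := by
  classical
  induction T using Finset.induction_on with
  | empty =>
    rw [Finset.prod_empty, mul_one]
    have : ∀ v : ↥Λ, mT Λ a b ∅ v
        = (if v = a then 1 else 0) + (if v = b then 1 else 0) := by
      intro v; rw [mT]; simp
    calc spin (φ a) * spin (φ b)
        = (∏ v : ↥Λ, (if v = a then spin (φ v) else 1)) *
          (∏ v : ↥Λ, (if v = b then spin (φ v) else 1)) := by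
          rw [Finset.prod_ite_eq', Finset.prod_ite_eq']
          simp
    _ = ∏ v : ↥Λ, ((if v = a then spin (φ v) else 1) * (if v = b then spin (φ v) else 1)) := by
          rw [Finset.prod_mul_distrib]
    _ = ∏ v : ↥Λ, spin (φ v) ^ (mT Λ a b ∅ v) := by
          refine Finset.prod_congr rfl fun v _ => ?_
          rw [this v, pow_add]
          by_cases h1 : v = a <;> by_cases h2 : v = b <;> simp [h1, h2]
  | @insert e T' he ih =>
    have hT' : T' ⊆ LR.ES Λ := fun f hf => hT (Finset.mem_insert_of_mem hf)
    have heES : e ∈ LR.ES Λ := hT (Finset.mem_insert_self e T')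
    rw [Finset.prod_insert he]
    have hm : ∀ v : ↥Λ, mT Λ a b (insert e T') v
        = mT Λ a b T' v + (if v.1 ∈ e then 1 else 0) := by
      intro v
      rw [mT, mT]
      have : (Finset.filter (fun f => v.1 ∈ f) (insert e T')).card
          = (Finset.filter (fun f => v.1 ∈ f) T').card + (if v.1 ∈ e then 1 else 0) := by
        rw [Finset.filter_insert]
        by_cases h : v.1 ∈ e
        · rw [if_pos h, Finset.card_insert_of_notMem (fun hc => he (Finset.mem_filter.mp hc).1),
            if_pos h]
        · rw [if_neg h, if_neg h, add_zero]
      omega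
    calc spin (φ a) * spin (φ b) * (XX Λ φ e * ∏ f ∈ T', XX Λ φ f)
        = (spin (φ a) * spin (φ b) * ∏ f ∈ T', XX Λ φ f) * XX Λ φ e := by ring
    _ = (∏ v : ↥Λ, spin (φ v) ^ (mT Λ a b T' v)) *
          ∏ v : ↥Λ, spin (φ v) ^ (if v.1 ∈ e then 1 else 0) := by
          rw [ih hT', edge_prod_eq Λ φ heES]
    _ = ∏ v : ↥Λ, spin (φ v) ^ (mT Λ a b (insert e T') v) := by
          rw [← Finset.prod_mul_distrib]
          exact Finset.prod_congr rfl fun v _ => by rw [hm v, pow_add]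

lemma spin_sum (a b : ↥Λ) {T : Finset (Sym2 (V d))} (hT : T ⊆ LR.ES Λ) :
    ∑ φ : ↥Λ → Bool, spin (φ a) * spin (φ b) * ∏ e ∈ T, XX Λ φ e
      = if LR.SB T = LR.x2 a.1 b.1 then (2 : ℝ) ^ Λ.card else 0 := by
  classical
  have h1 : ∑ φ : ↥Λ → Bool, spin (φ a) * spin (φ b) * ∏ e ∈ T, XX Λ φ e
      = ∑ φ : ↥Λ → Bool, ∏ v : ↥Λ, spin (φ v) ^ (mT Λ a b T v) :=
    Finset.sum_congr rfl fun φ _ => integrand_eq Λ φ a b hT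
  rw [h1]
  have h2 : ∑ φ : ↥Λ → Bool, ∏ v : ↥Λ, spin (φ v) ^ (mT Λ a b T v)
      = ∏ v : ↥Λ, ∑ c : Bool, spin c ^ (mT Λ a b T v) := by
    rw [Finset.prod_univ_sum (t := fun _ : ↥Λ => (Finset.univ : Finset Bool))
      (f := fun v c => spin c ^ (mT Λ a b T v))]
    rw [Fintype.piFinset_univ]
  rw [h2]
  have h3 : ∀ v : ↥Λ, ∑ c : Bool, spin c ^ (mT Λ a b T v)
      = if Even (mT Λ a b T v) then (2:ℝ) else 0 := by
    intro v
    rw [Fintype.sum_bool]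
    rw [show spin true = 1 from rfl, show spin false = -1 from rfl]
    by_cases h : Even (mT Λ a b T v)
    · rw [if_pos h, one_pow, Even.neg_one_pow h]; norm_num
    · rw [if_neg h, one_pow, Odd.neg_one_pow (Nat.odd_iff.mpr (Nat.mod_two_ne_zero.mp
        (fun hc => h (Nat.even_iff.mpr hc))))]
      norm_num
  have h4 : ∏ v : ↥Λ, ∑ c : Bool, spin c ^ (mT Λ a b T v)
      = if (∀ v : ↥Λ, Even (mT Λ a b T v)) then (2:ℝ) ^ Λ.card else 0 := by
    by_cases h : ∀ v : ↥Λ, Even (mT Λ a b T v)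
    · rw [if_pos h]
      calc ∏ v : ↥Λ, ∑ c : Bool, spin c ^ (mT Λ a b T v)
          = ∏ _v : ↥Λ, (2:ℝ) := Finset.prod_congr rfl fun v _ => by rw [h3 v, if_pos (h v)]
      _ = (2:ℝ) ^ Λ.card := by rw [Finset.prod_const, Finset.card_univ, Fintype.card_coe]
    · rw [if_neg h]
      push_neg at h
      obtain ⟨v, hv⟩ := h
      exact Finset.prod_eq_zero (Finset.mem_univ v) (by rw [h3 v, if_neg hv])
  rw [h4]
  congr 1
  -- the parity condition is the boundary condition
  have hSB : ∀ v : V d, LR.SB T v = ((Finset.filter (fun e => v ∈ e) T).card : ZMod 2) := by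
    intro v
    rw [LR.SB, Finset.sum_boole]
  have hx1 : ∀ (v : V d) (hvΛ : v ∈ Λ) (c : ↥Λ),
      (if (⟨v, hvΛ⟩ : ↥Λ) = c then (1 : ZMod 2) else 0) = LR.x1 c.1 v := by
    intro v hvΛ c
    rw [LR.x1]
    congr 1
    rw [eq_iff_iff]
    exact ⟨fun h' => congrArg Subtype.val h', fun h' => Subtype.ext h'⟩
  have heq : (∀ v : ↥Λ, Even (mT Λ a b T v)) ↔ LR.SB T = LR.x2 a.1 b.1 := by
    constructor
    · intro h
      funext v
      by_cases hvΛ : v ∈ Λ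
      · have hcast : ((mT Λ a b T ⟨v, hvΛ⟩ : ℕ) : ZMod 2) = 0 := by
          rw [ZMod.natCast_eq_zero_iff]
          exact (h ⟨v, hvΛ⟩).two_dvd
        rw [mT] at hcast
        push_cast at hcast
        rw [hx1 v hvΛ a, hx1 v hvΛ b] at hcast
        show LR.SB T v = LR.x1 a.1 v + LR.x1 b.1 v
        rw [hSB v]
        revert hcast
        generalize ((Finset.filter (fun e => v ∈ e) T).card : ZMod 2) = C
        generalize LR.x1 a.1 v = A
        generalize LR.x1 b.1 v = B
        revert A B C
        decide
      · have hSB0 : LR.SB T v = 0 := LR.SB_support_ES hT hvΛ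
        have hx0 : LR.x2 a.1 b.1 v = 0 := by
          rw [LR.x2, LR.x1, LR.x1, if_neg (fun hc : v = a.1 => hvΛ (by rw [hc]; exact a.2)),
            if_neg (fun hc : v = b.1 => hvΛ (by rw [hc]; exact b.2)), add_zero]
        rw [hSB0, hx0]
    · intro h v
      have hv0 : LR.SB T v.1 = LR.x1 a.1 v.1 + LR.x1 b.1 v.1 := congrFun h v.1
      rw [hSB v.1] at hv0
      have : ((mT Λ a b T v : ℕ) : ZMod 2) = 0 := by
        rw [mT]
        push_cast
        have hveq : (⟨v.1, v.2⟩ : ↥Λ) = v := rfl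
        rw [hveq] at *
        rw [show (if v = a then (1 : ZMod 2) else 0) = LR.x1 a.1 v.1 from
          by rw [← hx1 v.1 v.2 a]]
        rw [show (if v = b then (1 : ZMod 2) else 0) = LR.x1 b.1 v.1 from
          by rw [← hx1 v.1 v.2 b]]
        rw [show ((Finset.filter (fun e => v.1 ∈ e) T).card : ZMod 2)
            = LR.x1 a.1 v.1 + LR.x1 b.1 v.1 from hv0]
        generalize LR.x1 a.1 v.1 = A
        generalize LR.x1 b.1 v.1 = B
        revert A B
        decide
      rw [Nat.even_iff]
      rwa [ZMod.natCast_eq_zero_iff, Nat.dvd_iff_mod_eq_zero] at this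
  rw [eq_iff_iff]
  exact heq


lemma numer_eq (a b : ↥Λ) :
    ∑ φ : ↥Λ → Bool, spin (φ a) * spin (φ b) * Real.exp (-(β * isingH Λ J φ))
      = ((∏ e ∈ LR.ES Λ, Real.cosh (KK β J hJs e)) * (2:ℝ) ^ Λ.card) *
          LR.Z (wt β J hJs) (LR.ES Λ) (LR.x2 a.1 b.1) := by
  classical
  set C : ℝ := ∏ e ∈ LR.ES Λ, Real.cosh (KK β J hJs e) with hC
  have hexp : ∀ φ : ↥Λ → Bool, Real.exp (-(β * isingH Λ J φ))
      = C * ∑ T ∈ (LR.ES Λ).powerset, ∏ e ∈ T, (wt β J hJs e * XX Λ φ e) := by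
    intro φ
    rw [hamiltonian_expand β J hJs Λ φ, Real.exp_sum]
    have h1 : ∀ e ∈ LR.ES Λ, Real.exp (KK β J hJs e * XX Λ φ e)
        = Real.cosh (KK β J hJs e) * (1 + wt β J hJs e * XX Λ φ e) := by
      intro e _
      exact exp_edge _ _ (XX_cases Λ φ e)
    rw [Finset.prod_congr rfl h1, Finset.prod_mul_distrib, ← hC]
    congr 1
    have h2 : ∀ e ∈ LR.ES Λ, (1 : ℝ) + wt β J hJs e * XX Λ φ e
        = wt β J hJs e * XX Λ φ e + 1 := fun e _ => add_comm _ _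
    rw [Finset.prod_congr rfl h2]
    rw [Finset.prod_add]
    apply Finset.sum_congr rfl
    intro T _
    rw [Finset.prod_const_one, mul_one]
  calc ∑ φ : ↥Λ → Bool, spin (φ a) * spin (φ b) * Real.exp (-(β * isingH Λ J φ))
      = C * ∑ φ : ↥Λ → Bool, ∑ T ∈ (LR.ES Λ).powerset,
          spin (φ a) * spin (φ b) * ∏ e ∈ T, (wt β J hJs e * XX Λ φ e) := by
        rw [Finset.mul_sum]
        apply Finset.sum_congr rfl
        intro φ _
        rw [hexp φ]
        simp only [Finset.mul_sum]
        apply Finset.sum_congr rfl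
        intro T _
        ring
  _ = C * ∑ T ∈ (LR.ES Λ).powerset, (∏ e ∈ T, wt β J hJs e) *
        ∑ φ : ↥Λ → Bool, spin (φ a) * spin (φ b) * ∏ e ∈ T, XX Λ φ e := by
        rw [Finset.sum_comm]
        congr 1
        apply Finset.sum_congr rfl
        intro T _
        rw [Finset.mul_sum]
        apply Finset.sum_congr rfl
        intro φ _
        rw [Finset.prod_mul_distrib]
        ring
  _ = C * ∑ T ∈ (LR.ES Λ).powerset, (∏ e ∈ T, wt β J hJs e) *
        (if LR.SB T = LR.x2 a.1 b.1 then (2:ℝ) ^ Λ.card else 0) := by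
        congr 1
        apply Finset.sum_congr rfl
        intro T hT
        rw [spin_sum Λ a b (Finset.mem_powerset.mp hT)]
  _ = (C * (2:ℝ) ^ Λ.card) * LR.Z (wt β J hJs) (LR.ES Λ) (LR.x2 a.1 b.1) := by
        rw [LR.Z, Finset.mul_sum, Finset.mul_sum]
        apply Finset.sum_congr rfl
        intro T _
        rw [LR.WW]
        by_cases h : LR.SB T = LR.x2 a.1 b.1
        · rw [if_pos h, if_pos h]; ring
        · rw [if_neg h, if_neg h]; ring

lemma corr_eq (a b : ↥Λ) :
    corr Λ β J a b = LR.Z (wt β J hJs) (LR.ES Λ) (LR.x2 a.1 b.1)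
      / LR.Z (wt β J hJs) (LR.ES Λ) 0 := by
  have hden : ∑ φ : ↥Λ → Bool, Real.exp (-(β * isingH Λ J φ))
      = ((∏ e ∈ LR.ES Λ, Real.cosh (KK β J hJs e)) * (2:ℝ) ^ Λ.card) *
          LR.Z (wt β J hJs) (LR.ES Λ) 0 := by
    have h1 : ∀ φ : ↥Λ → Bool, Real.exp (-(β * isingH Λ J φ))
        = spin (φ a) * spin (φ a) * Real.exp (-(β * isingH Λ J φ)) := by
      intro φ
      rw [spin_sq, one_mul]
    rw [Finset.sum_congr rfl (fun φ _ => h1 φ), numer_eq β J hJs Λ a a, LR.x2_self]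
  have hCpos : (0:ℝ) < (∏ e ∈ LR.ES Λ, Real.cosh (KK β J hJs e)) * (2:ℝ) ^ Λ.card := by
    apply mul_pos
    · exact Finset.prod_pos fun e _ => Real.cosh_pos _
    · positivity
  rw [corr, numer_eq β J hJs Λ a b, hden, mul_div_mul_left _ _ hCpos.ne']

end Expansion

lemma wt_mk (β : ℝ) (J : V d → V d → ℝ) (hJs : ∀ u v, J u v = J v u) (u v : V d) :
    wt β J hJs s(u, v) = Real.tanh (β * J u v) := by
  rw [wt, KK, Sym2.lift_mk]

/-- Simon–Lieb type inequality for the finite-volume Ising model. -/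
theorem statement11 (d : ℕ) (hd : 1 ≤ d) (Λ : Finset (V d))
    (β : ℝ) (hβ : 0 ≤ β) (J : V d → V d → ℝ)
    (hJ : ∀ u v, 0 ≤ J u v) (hJs : ∀ u v, J u v = J v u)
    (ℓ : ℝ) (hℓ : 0 < ℓ)
    (B : Finset (V d)) (hB : ∀ y : V d, y ∈ B ↔ nrm y ≤ ℓ) (hBΛ : B ⊆ Λ)
    (h0B : (0 : V d) ∈ B)
    (x : V d) (hx : x ∈ Λ) (hxℓ : ℓ < nrm x) :
    corr Λ β J ⟨0, hBΛ h0B⟩ ⟨x, hx⟩ ≤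
      ∑ u ∈ B.attach, ∑ v ∈ Λ.attach,
        if ℓ < nrm v.1 then
          corr B β J ⟨0, h0B⟩ u * Real.tanh (β * J u.1 v.1) * corr Λ β J v ⟨x, hx⟩
        else 0 := by
  classical
  set w : Sym2 (V d) → ℝ := wt β J hJs with hwdef
  have hw : ∀ e, 0 ≤ w e := wt_nonneg β J hJs hβ hJ
  have hxB : x ∉ B := fun hc => (not_le.mpr hxℓ) ((hB x).mp hc)
  set ZB : (V d → ZMod 2) → ℝ := LR.Z w (LR.ES B) with hZB
  set ZL : (V d → ZMod 2) → ℝ := LR.Z w (LR.ES Λ) with hZL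
  have hZB0 : (0:ℝ) < ZB 0 := lt_of_lt_of_le one_pos (LR.one_le_Z_zero hw (LR.ES B))
  have hZL0 : (0:ℝ) < ZL 0 := lt_of_lt_of_le one_pos (LR.one_le_Z_zero hw (LR.ES Λ))
  have hstar := LR.star (w := w) hBΛ hw h0B hx hxB
  -- rewrite the left-hand side
  have hcorrL : corr Λ β J ⟨0, hBΛ h0B⟩ ⟨x, hx⟩ = ZL (LR.x2 0 x) / ZL 0 :=
    corr_eq β J hJs Λ _ _
  -- rewrite the right-hand side
  set G : V d → V d → ℝ := fun u v =>
    ZB (LR.x2 0 u) / ZB 0 * Real.tanh (β * J u v) * (ZL (LR.x2 v x) / ZL 0) with hG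
  have hRHS : ∑ u ∈ B.attach, ∑ v ∈ Λ.attach,
      (if ℓ < nrm v.1 then
        corr B β J ⟨0, h0B⟩ u * Real.tanh (β * J u.1 v.1) * corr Λ β J v ⟨x, hx⟩
      else 0)
      = ∑ p ∈ B ×ˢ (Λ \ B), G p.1 p.2 := by
    have h1 : ∀ (u : ↥B) (v : ↥Λ),
        corr B β J ⟨0, h0B⟩ u * Real.tanh (β * J u.1 v.1) * corr Λ β J v ⟨x, hx⟩
        = G u.1 v.1 := by
      intro u v
      rw [corr_eq β J hJs B ⟨0, h0B⟩ u, corr_eq β J hJs Λ v ⟨x, hx⟩, hG]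
    calc ∑ u ∈ B.attach, ∑ v ∈ Λ.attach,
        (if ℓ < nrm v.1 then
          corr B β J ⟨0, h0B⟩ u * Real.tanh (β * J u.1 v.1) * corr Λ β J v ⟨x, hx⟩
        else 0)
        = ∑ u ∈ B.attach, ∑ v ∈ Λ.attach, (if ℓ < nrm v.1 then G u.1 v.1 else 0) := by
          apply Finset.sum_congr rfl; intro u _
          apply Finset.sum_congr rfl; intro v _
          by_cases h : ℓ < nrm v.1
          · rw [if_pos h, if_pos h, h1 u v]
          · rw [if_neg h, if_neg h]
    _ = ∑ u ∈ B, ∑ v ∈ Λ, (if ℓ < nrm v then G u v else 0) := by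
          rw [Finset.sum_attach B (fun u => ∑ v ∈ Λ.attach, (if ℓ < nrm v.1 then G u v.1 else 0))]
          apply Finset.sum_congr rfl; intro u _
          rw [Finset.sum_attach Λ (fun v => if ℓ < nrm v then G u v else 0)]
    _ = ∑ u ∈ B, ∑ v ∈ Λ \ B, G u v := by
          apply Finset.sum_congr rfl; intro u _
          rw [← Finset.sum_filter]
          congr 1
          ext v
          rw [Finset.mem_filter, Finset.mem_sdiff]
          constructor
          · rintro ⟨hvΛ, hlt⟩
            exact ⟨hvΛ, fun hc => (not_le.mpr hlt) ((hB v).mp hc)⟩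
          · rintro ⟨hvΛ, hvB⟩
            exact ⟨hvΛ, lt_of_not_ge (fun hc => hvB ((hB v).mpr hc))⟩
    _ = ∑ p ∈ B ×ˢ (Λ \ B), G p.1 p.2 := (Finset.sum_product' _ _ _).symm
  rw [hcorrL, hRHS]
  -- conclude from the star inequality
  have hfrac : ZL (LR.x2 0 x) / ZL 0
      = (ZL (LR.x2 0 x) * ZB 0) / (ZB 0 * ZL 0) := by
    rw [mul_comm (ZB 0) (ZL 0), mul_div_mul_right _ _ hZB0.ne']
  rw [hfrac]
  refine le_trans (div_le_div_of_nonneg_right hstar (mul_pos hZB0 hZL0).le) ?_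
  rw [Finset.sum_div]
  apply le_of_eq
  apply Finset.sum_congr rfl
  rintro ⟨u, v⟩ hp
  rw [hG]
  have hwm : w s(u, v) = Real.tanh (β * J u v) := wt_mk β J hJs u v
  rw [hwm, LR.x2_comm x v]
  field_simp
  ring

end LongRange
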